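/- Let K be a compact group with Haar probability measure μ_K acting measurably on a standard Borel space X, ρ a positive jointly measurable cocycle, ν a probability measure with Radon–Nikodym cocycle ρ, and φ ∈ L¹(X,ν). Define the averaging operator (A_K^ρ φ)(x) = (∫_K φ(T_k x)ρ(k,x)dμ_K(k)) / (∫_K ρ(k,x)dμ_K(k)) wherever the denominator is finite (and 0 otherwise). Then A_K^ρ φ = E(φ | I_K^ν) ν-almost surely, where I_K^ν is the ν-completion of the σ-algebra of K-invariant Borel sets. -/

import Mathlib

open MeasureTheory Set
open scoped ENNReal NNReal

/-- The averaging operator over a compact group equals the conditional expectation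
with respect to the σ-algebra of K-invariant Borel sets. -/
theorem stmt7 {K X : Type*} [Group K] [TopologicalSpace K] [IsTopologicalGroup K]
    [CompactSpace K] [MeasurableSpace K] [BorelSpace K]
    [MeasurableSpace X] [StandardBorelSpace X]
    (μK : Measure K) [μK.IsHaarMeasure] [IsProbabilityMeasure μK]
    (T : K → X → X) (hTmeas : Measurable fun p : K × X => T p.1 p.2)
    (hT1 : ∀ x, T 1 x = x) (hTmul : ∀ g h x, T (g * h) x = T g (T h x))
    (ρ : K → X → ℝ) (hρmeas : Measurable fun p : K × X => ρ p.1 p.2)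
    (hρpos : ∀ g x, 0 < ρ g x)
    (hρcoc : ∀ g h x, ρ (g * h) x = ρ g (T h x) * ρ h x)
    (ν : Measure X) [IsProbabilityMeasure ν]
    (hRN : ∀ k, ∀ A : Set X, MeasurableSet A →
      ν (T k '' A) = ∫⁻ x in A, ENNReal.ofReal (ρ k x) ∂ν)
    (φ : X → ℝ) (hφ : Integrable φ ν) :
    (fun x => (∫ k, φ (T k x) * ρ k x ∂μK) / (∫ k, ρ k x ∂μK))
      =ᵐ[ν]
    ν[φ | MeasurableSpace.generateFrom
        {A : Set X | MeasurableSet A ∧ ∀ k, T k '' A = A}] := by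
  classical
  have hρk : ∀ k, Measurable fun x => ρ k x := fun k => hρmeas.comp measurable_prodMk_left
  have hρx : ∀ x, Measurable fun k => ρ k x := fun x => hρmeas.comp measurable_prodMk_right
  have hρne : ∀ (h : K) (x : X), ρ h x ≠ 0 := fun h x => (hρpos h x).ne'
  have hTk : ∀ k, Measurable (T k) := fun k => hTmeas.comp measurable_prodMk_left
  have hTinv1 : ∀ (k : K) (x : X), T k⁻¹ (T k x) = x := fun k x => by
    rw [← hTmul, inv_mul_cancel, hT1]
  have hTinv2 : ∀ (k : K) (x : X), T k (T k⁻¹ x) = x := fun k x => by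
    rw [← hTmul, mul_inv_cancel, hT1]
  have hTsurj : ∀ k, Function.Surjective (T k) := fun k y => ⟨T k⁻¹ y, hTinv2 k y⟩
  have hTinj : ∀ k, Function.Injective (T k) := fun k a b hab => by
    have := congrArg (T k⁻¹) hab
    rwa [hTinv1, hTinv1] at this
  have himg : ∀ (k : K) (A : Set X), T k '' A = T k⁻¹ ⁻¹' A := by
    intro k A
    ext y
    constructor
    · rintro ⟨a, ha, rfl⟩
      simpa [hTinv1] using ha
    · intro hy
      exact ⟨T k⁻¹ y, hy, hTinv2 k y⟩
  -- right invariance of Haar measure on a compact group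
  haveI : μK.IsMulRightInvariant := by
    constructor
    intro g
    haveI : IsProbabilityMeasure (Measure.map (· * g) μK) :=
      Measure.isProbabilityMeasure_map (measurable_mul_const g).aemeasurable
    exact Measure.isHaarMeasure_eq_of_isProbabilityMeasure _ μK
  -- the weighted measures and the change-of-variables formulas
  set W : K → Measure X := fun k => ν.withDensity fun x => ENNReal.ofReal (ρ k x) with hW
  have hres : ∀ (k : K) (A : Set X), MeasurableSet A →
      ν.restrict (T k '' A) = Measure.map (T k) ((W k).restrict A) := by
    intro k A hA
    have hTA : MeasurableSet (T k '' A) := by rw [himg]; exact hTk k⁻¹ hA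
    ext B hB
    rw [Measure.map_apply (hTk k) hB, Measure.restrict_apply hB, Measure.restrict_apply (hTk k hB)]
    rw [hW]
    simp only
    rw [withDensity_apply _ ((hTk k hB).inter hA), ← hRN k _ ((hTk k hB).inter hA)]
    congr 1
    rw [inter_comm (T k ⁻¹' B) A, image_inter_preimage (T k) A B, inter_comm]
  have hCoV : ∀ (k : K) (g : X → ℝ), AEStronglyMeasurable g ν → ∀ (A : Set X), MeasurableSet A →
      ∫ x in T k '' A, g x ∂ν = ∫ x in A, g (T k x) * ρ k x ∂ν := by
    intro k g hg A hA
    rw [hres k A hA, integral_map (hTk k).aemeasurable (by rw [← hres k A hA]; exact hg.restrict)]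
    rw [hW]
    simp only
    rw [restrict_withDensity hA]
    rw [show (fun x => ENNReal.ofReal (ρ k x))
        = (fun x => ((Real.toNNReal (ρ k x) : ℝ≥0) : ℝ≥0∞)) from rfl]
    rw [integral_withDensity_eq_integral_smul (f := fun x => Real.toNNReal (ρ k x))
      (measurable_real_toNNReal.comp (hρk k)) _]
    refine integral_congr_ae (Filter.Eventually.of_forall fun x => ?_)
    simp [NNReal.smul_def, Real.coe_toNNReal _ (hρpos k x).le, mul_comm]
  have hCoVl : ∀ (k : K) (G : X → ℝ≥0∞), Measurable G → ∀ (A : Set X), MeasurableSet A →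
      ∫⁻ x in A, G (T k x) * ENNReal.ofReal (ρ k x) ∂ν = ∫⁻ x in T k '' A, G x ∂ν := by
    intro k G hG A hA
    rw [hres k A hA, lintegral_map hG (hTk k)]
    rw [hW]
    simp only
    rw [restrict_withDensity hA,
      lintegral_withDensity_eq_lintegral_mul_non_measurable _
        (f := fun x => ENNReal.ofReal (ρ k x))
        (ENNReal.measurable_ofReal.comp (hρk k))
        (Filter.Eventually.of_forall fun x => ENNReal.ofReal_lt_top) _]
    exact lintegral_congr fun x => (mul_comm _ _)
  -- key L¹ identity
  have key1 : ∀ g : X → ℝ, Measurable g →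
      ∫⁻ x, ∫⁻ k, (‖g (T k x)‖₊ : ℝ≥0∞) * ENNReal.ofReal (ρ k x) ∂μK ∂ν
        = ∫⁻ x, (‖g x‖₊ : ℝ≥0∞) ∂ν := by
    intro g hg
    rw [lintegral_lintegral_swap]
    · have h1 : ∀ k : K, ∫⁻ x, (‖g (T k x)‖₊ : ℝ≥0∞) * ENNReal.ofReal (ρ k x) ∂ν
          = ∫⁻ x, (‖g x‖₊ : ℝ≥0∞) ∂ν := by
        intro k
        have := hCoVl k (fun x => (‖g x‖₊ : ℝ≥0∞)) hg.nnnorm.coe_nnreal_ennreal univ MeasurableSet.univ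
        simpa [Measure.restrict_univ, image_univ, (hTsurj k).range_eq] using this
      rw [lintegral_congr h1]
      simp [measure_univ]
    · exact (((hg.comp (hTmeas.comp measurable_swap)).nnnorm.coe_nnreal_ennreal).mul
        (ENNReal.measurable_ofReal.comp (hρmeas.comp measurable_swap))).aemeasurable
  have hnorm : ∀ (g : X → ℝ) (k : K) (x : X), (‖g (T k x) * ρ k x‖₊ : ℝ≥0∞)
      = (‖g (T k x)‖₊ : ℝ≥0∞) * ENNReal.ofReal (ρ k x) := by
    intro g k x
    rw [nnnorm_mul, ENNReal.coe_mul, ← Real.enorm_eq_ofReal (hρpos k x).le]; rfl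
  -- Fubini integrability
  have hprod : ∀ (g : X → ℝ), StronglyMeasurable g → Integrable g ν → ∀ (s : Set X),
      MeasurableSet s →
      Integrable (Function.uncurry fun (k : K) (x : X) => g (T k x) * ρ k x)
        (μK.prod (ν.restrict s)) := by
    intro g hgm hgi s hs
    constructor
    · exact ((hgm.measurable.comp hTmeas).mul hρmeas).aestronglyMeasurable
    · rw [hasFiniteIntegral_def]
      have hmeas : Measurable fun p : K × X => g (T p.1 p.2) * ρ p.1 p.2 :=
        (hgm.measurable.comp hTmeas).mul hρmeas
      calc ∫⁻ p, (‖Function.uncurry (fun (k : K) (x : X) => g (T k x) * ρ k x) p‖₊ : ℝ≥0∞)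
            ∂(μK.prod (ν.restrict s))
          = ∫⁻ p : K × X, (‖g (T p.1 p.2) * ρ p.1 p.2‖₊ : ℝ≥0∞) ∂(μK.prod (ν.restrict s)) :=
            rfl
        _ = ∫⁻ k, ∫⁻ x in s, (‖g (T k x)‖₊ : ℝ≥0∞) * ENNReal.ofReal (ρ k x) ∂ν ∂μK := by
            rw [lintegral_prod _ hmeas.nnnorm.coe_nnreal_ennreal.aemeasurable]
            exact lintegral_congr fun k => lintegral_congr fun x => hnorm g k x
        _ = ∫⁻ k, ∫⁻ x in T k '' s, (‖g x‖₊ : ℝ≥0∞) ∂ν ∂μK :=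
            lintegral_congr fun k => hCoVl k _ hgm.measurable.nnnorm.coe_nnreal_ennreal s hs
        _ ≤ ∫⁻ k, ∫⁻ x, (‖g x‖₊ : ℝ≥0∞) ∂ν ∂μK :=
            lintegral_mono fun k => setLIntegral_le_lintegral _ _
        _ = ∫⁻ x, (‖g x‖₊ : ℝ≥0∞) ∂ν := by simp [measure_univ]
        _ < ⊤ := hgi.2
  -- the averaging identity on invariant sets
  have hsetint : ∀ (s : Set X), MeasurableSet s → (∀ k, T k '' s = s) →
      ∀ (g : X → ℝ), StronglyMeasurable g → Integrable g ν →
      ∫ x in s, (∫ k, g (T k x) * ρ k x ∂μK) ∂ν = ∫ x in s, g x ∂ν := by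
    intro s hs hsinv g hgm hgi
    rw [← integral_integral_swap (hprod g hgm hgi s hs)]
    have h1 : ∀ k : K, ∫ x in s, g (T k x) * ρ k x ∂ν = ∫ x in s, g x ∂ν := by
      intro k
      rw [← hCoV k g hgm.aestronglyMeasurable s hs, hsinv k]
    rw [integral_congr_ae (Filter.Eventually.of_forall h1)]
    simp [measure_univ]
  -- the measurable representative of φ
  set ψ : X → ℝ := hφ.1.mk φ with hψdef
  have hψm : StronglyMeasurable ψ := hφ.1.stronglyMeasurable_mk
  have hφψ : φ =ᵐ[ν] ψ := hφ.1.ae_eq_mk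
  have hψi : Integrable ψ ν := hφ.congr hφψ
  -- numerator, denominator
  set N : X → ℝ := fun x => ∫ k, ψ (T k x) * ρ k x ∂μK with hN
  set D : X → ℝ := fun x => ∫ k, ρ k x ∂μK with hD
  set Dl : X → ℝ≥0∞ := fun x => ∫⁻ k, ENNReal.ofReal (ρ k x) ∂μK with hDl
  set f : X → ℝ := fun x => N x / D x with hf
  have hNm : StronglyMeasurable N := by
    rw [hN]
    exact StronglyMeasurable.integral_prod_right'
      (f := fun p : X × K => ψ (T p.2 p.1) * ρ p.2 p.1)
      (((hψm.measurable.comp (hTmeas.comp measurable_swap)).mul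
        (hρmeas.comp measurable_swap)).stronglyMeasurable)
  have hDm : StronglyMeasurable D := by
    rw [hD]
    exact StronglyMeasurable.integral_prod_right' (f := fun p : X × K => ρ p.2 p.1)
      ((hρmeas.comp measurable_swap).stronglyMeasurable)
  have hfm : Measurable f := by
    rw [hf]; exact hNm.measurable.div hDm.measurable
  have hDlmeas : Measurable Dl := by
    rw [hDl]
    exact Measurable.lintegral_prod_right'
      (f := fun p : X × K => ENNReal.ofReal (ρ p.2 p.1))
      (ENNReal.measurable_ofReal.comp (hρmeas.comp measurable_swap))
  -- invariance of N, D, f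
  have hNinv : ∀ (h : K) (x : X), N (T h x) = N x * (ρ h x)⁻¹ := by
    intro h x
    rw [hN]
    simp only
    have h1 : ∀ k : K, ψ (T k (T h x)) * ρ k (T h x)
        = ψ (T (k * h) x) * ρ (k * h) x * (ρ h x)⁻¹ := by
      intro k
      rw [← hTmul, hρcoc k h x, ← mul_assoc, mul_inv_cancel_right₀ (hρne h x)]
    rw [integral_congr_ae (Filter.Eventually.of_forall h1), integral_mul_const]
    rw [integral_mul_right_eq_self (fun k => ψ (T k x) * ρ k x) h]
  have hDinv : ∀ (h : K) (x : X), D (T h x) = D x * (ρ h x)⁻¹ := by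
    intro h x
    rw [hD]
    simp only
    have h1 : ∀ k : K, ρ k (T h x) = ρ (k * h) x * (ρ h x)⁻¹ := by
      intro k
      rw [hρcoc k h x, mul_inv_cancel_right₀ (hρne h x)]
    rw [integral_congr_ae (Filter.Eventually.of_forall h1), integral_mul_const]
    rw [integral_mul_right_eq_self (fun k => ρ k x) h]
  have hfinv : ∀ (h : K) (x : X), f (T h x) = f x := by
    intro h x
    rw [hf]
    simp only
    rw [hNinv, hDinv, mul_comm (N x) _, mul_comm (D x) _]
    exact mul_div_mul_left _ _ (inv_ne_zero (hρne h x))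
  -- f is measurable with respect to the invariant σ-algebra
  have hfmm : Measurable[MeasurableSpace.generateFrom {A : Set X | MeasurableSet A ∧ ∀ k, T k '' A = A}] f := by
    intro t ht
    apply MeasurableSpace.measurableSet_generateFrom
    refine ⟨hfm ht, fun k => ?_⟩
    rw [himg]
    ext y
    simp only [mem_preimage, hfinv k⁻¹ y]
  have hle : MeasurableSpace.generateFrom {A : Set X | MeasurableSet A ∧ ∀ k, T k '' A = A} ≤ (inferInstance : MeasurableSpace X) :=
    MeasurableSpace.generateFrom_le fun A hA => hA.1
  -- every m-measurable set is an invariant Borel set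
  have hminv : ∀ s : Set X, MeasurableSet[MeasurableSpace.generateFrom
      {A : Set X | MeasurableSet A ∧ ∀ k, T k '' A = A}] s →
      MeasurableSet s ∧ ∀ k, T k '' s = s := by
    intro s hs
    refine MeasurableSpace.generateFrom_induction
      {A : Set X | MeasurableSet A ∧ ∀ k, T k '' A = A}
      (fun A _ => MeasurableSet A ∧ ∀ k, T k '' A = A)
      (fun t ht _ => ht) ⟨MeasurableSet.empty, fun k => image_empty _⟩
      (fun t _ ht => ⟨ht.1.compl, fun k => by
        rw [himg, preimage_compl, ← himg, ht.2 k]⟩)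
      (fun g _ hg => ⟨MeasurableSet.iUnion fun i => (hg i).1, fun k => by
        rw [image_iUnion]; exact iUnion_congr fun i => (hg i).2 k⟩) s hs
  -- denominator facts
  have hDl_int : ∫⁻ x, Dl x ∂ν = 1 := by
    rw [hDl]
    simp only
    rw [lintegral_lintegral_swap]
    · have h1 : ∀ k : K, ∫⁻ x, ENNReal.ofReal (ρ k x) ∂ν = 1 := by
        intro k
        have h := hRN k univ MeasurableSet.univ
        rw [image_univ, (hTsurj k).range_eq, measure_univ] at h
        simpa using h.symm
      rw [lintegral_congr h1]
      simp [measure_univ]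
    · exact ((ENNReal.measurable_ofReal.comp (hρmeas.comp measurable_swap)).aemeasurable)
  have hDlt : ∀ᵐ x ∂ν, Dl x < ⊤ :=
    ae_lt_top hDlmeas (by rw [hDl_int]; exact ENNReal.one_ne_top)
  have hDlpos : ∀ x, 0 < Dl x := by
    intro x
    rw [hDl]
    simp only
    rw [lintegral_pos_iff_support (f := fun k => ENNReal.ofReal (ρ k x)) (ENNReal.measurable_ofReal.comp (hρx x))]
    have h1 : Function.support (fun k => ENNReal.ofReal (ρ k x)) = univ := by
      ext k
      simp [Function.mem_support, ENNReal.ofReal_eq_zero, not_le, hρpos k x]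
    rw [h1, measure_univ]
    exact zero_lt_one
  have hDeq : ∀ x, D x = (Dl x).toReal := by
    intro x
    rw [hD, hDl]
    simp only
    exact integral_eq_lintegral_of_nonneg_ae
      (Filter.Eventually.of_forall fun k => (hρpos k x).le) (hρx x).aestronglyMeasurable
  have hDae : ∀ᵐ x ∂ν, 0 < D x ∧ ENNReal.ofReal (D x) = Dl x := by
    filter_upwards [hDlt] with x hx
    refine ⟨?_, ?_⟩
    · rw [hDeq]; exact ENNReal.toReal_pos (hDlpos x).ne' hx.ne
    · rw [hDeq, ENNReal.ofReal_toReal hx.ne]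
  -- relation between f, N, D
  have hfae : ∀ᵐ x ∂ν, f x * D x = N x ∧ (‖f x‖₊ : ℝ≥0∞) * Dl x = (‖N x‖₊ : ℝ≥0∞) := by
    filter_upwards [hDae] with x hx
    have h1 : f x * D x = N x := by
      rw [hf]; simp only; exact div_mul_cancel₀ _ hx.1.ne'
    refine ⟨h1, ?_⟩
    calc (‖f x‖₊ : ℝ≥0∞) * Dl x = (‖f x‖₊ : ℝ≥0∞) * (‖D x‖₊ : ℝ≥0∞) := by
          rw [← hx.2, ← Real.enorm_eq_ofReal hx.1.le]; rfl
      _ = (‖f x * D x‖₊ : ℝ≥0∞) := by rw [nnnorm_mul, ENNReal.coe_mul]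
      _ = (‖N x‖₊ : ℝ≥0∞) := by rw [h1]
  -- integrability of N
  have hNint : Integrable N ν := by
    refine ⟨hNm.aestronglyMeasurable, ?_⟩
    rw [hasFiniteIntegral_def]
    calc ∫⁻ x, (‖N x‖₊ : ℝ≥0∞) ∂ν
        ≤ ∫⁻ x, ∫⁻ k, (‖ψ (T k x)‖₊ : ℝ≥0∞) * ENNReal.ofReal (ρ k x) ∂μK ∂ν := by
          refine lintegral_mono fun x => ?_
          calc (‖N x‖₊ : ℝ≥0∞) ≤ ∫⁻ k, (‖ψ (T k x) * ρ k x‖₊ : ℝ≥0∞) ∂μK :=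
                enorm_integral_le_lintegral_enorm _
            _ = _ := lintegral_congr fun k => hnorm ψ k x
      _ = ∫⁻ x, (‖ψ x‖₊ : ℝ≥0∞) ∂ν := key1 ψ hψm.measurable
      _ < ⊤ := hψi.2
  -- integrability of f
  have hfint : Integrable f ν := by
    refine ⟨hfm.aestronglyMeasurable, ?_⟩
    rw [hasFiniteIntegral_def]
    have e1 : ∫⁻ x, (‖f x‖₊ : ℝ≥0∞) * Dl x ∂ν = ∫⁻ x, (‖f x‖₊ : ℝ≥0∞) ∂ν := by
      have h1 : ∀ x, (‖f x‖₊ : ℝ≥0∞) * Dl x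
          = ∫⁻ k, (‖f (T k x)‖₊ : ℝ≥0∞) * ENNReal.ofReal (ρ k x) ∂μK := by
        intro x
        rw [hDl]
        simp only
        rw [← lintegral_const_mul (f := fun k => ENNReal.ofReal (ρ k x)) _
          (ENNReal.measurable_ofReal.comp (hρx x))]
        exact lintegral_congr fun k => by rw [hfinv k x]
      rw [lintegral_congr h1]
      exact key1 f hfm
    have e2 : ∫⁻ x, (‖f x‖₊ : ℝ≥0∞) * Dl x ∂ν = ∫⁻ x, (‖N x‖₊ : ℝ≥0∞) ∂ν :=
      lintegral_congr_ae (hfae.mono fun x hx => hx.2)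
    change ∫⁻ x, (‖f x‖₊ : ℝ≥0∞) ∂ν < ⊤
    rw [← e1, e2]
    exact hNint.2
  -- set-integral equality on invariant sets
  have hset : ∀ s : Set X, MeasurableSet[MeasurableSpace.generateFrom {A : Set X | MeasurableSet A ∧ ∀ k, T k '' A = A}] s →
      ∫ x in s, f x ∂ν = ∫ x in s, ψ x ∂ν := by
    intro s hms
    obtain ⟨hs, hsinv⟩ := hminv s hms
    have h1 : ∫ x in s, f x ∂ν = ∫ x in s, f x * D x ∂ν := by
      rw [← hsetint s hs hsinv f hfm.stronglyMeasurable hfint]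
      refine integral_congr_ae (Filter.Eventually.of_forall fun x => ?_)
      show (∫ k, f (T k x) * ρ k x ∂μK) = f x * D x
      have : ∀ k : K, f (T k x) * ρ k x = f x * ρ k x := fun k => by rw [hfinv k x]
      rw [integral_congr_ae (Filter.Eventually.of_forall this), integral_const_mul]
    have h2 : ∫ x in s, f x * D x ∂ν = ∫ x in s, N x ∂ν :=
      integral_congr_ae (ae_restrict_of_ae (hfae.mono fun x hx => hx.1))
    have h3 : ∫ x in s, N x ∂ν = ∫ x in s, ψ x ∂ν := by
      rw [hN]
      exact hsetint s hs hsinv ψ hψm hψi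
    rw [h1, h2, h3]
  -- conclude via uniqueness of conditional expectation
  haveI : SigmaFinite (ν.trim hle) := by
    haveI := isFiniteMeasure_trim hle (μ := ν)
    infer_instance
  have hmain : f =ᵐ[ν] ν[ψ | MeasurableSpace.generateFrom {A : Set X | MeasurableSet A ∧ ∀ k, T k '' A = A}] := by
    refine ae_eq_condExp_of_forall_setIntegral_eq hle hψi
      (fun s _ _ => hfint.integrableOn) (fun s hs _ => hset s hs) ?_
    have hsm : StronglyMeasurable[MeasurableSpace.generateFrom
        {A : Set X | MeasurableSet A ∧ ∀ k, T k '' A = A}] f :=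
      Measurable.stronglyMeasurable hfmm
    exact ⟨f, hsm, Filter.EventuallyEq.rfl⟩
  -- transfer from ψ back to φ
  obtain ⟨Z, hZsub, hZm, hZ0⟩ :=
    exists_measurable_superset_of_null (μ := ν) (ae_iff.mp hφψ)
  have hZeq : ∀ x, x ∉ Z → φ x = ψ x := by
    intro x hx
    by_contra h
    exact hx (hZsub h)
  have hnullpre : ∀ k, ν (T k ⁻¹' Z) = 0 := by
    intro k
    have h := hRN k (T k ⁻¹' Z) (hTk k hZm)
    rw [image_preimage_eq _ (hTsurj k), hZ0] at h
    have h2 : (fun x => ENNReal.ofReal (ρ k x)) =ᵐ[ν.restrict (T k ⁻¹' Z)] 0 :=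
      (lintegral_eq_zero_iff (f := fun x => ENNReal.ofReal (ρ k x)) (ENNReal.measurable_ofReal.comp (hρk k))).mp h.symm
    have huniv : (univ : Set X) = {x | ¬ ENNReal.ofReal (ρ k x) = (0 : X → ℝ≥0∞) x} := by
      ext x
      simp [ENNReal.ofReal_eq_zero, not_le, hρpos k x]
    calc ν (T k ⁻¹' Z) = ν.restrict (T k ⁻¹' Z) univ := (Measure.restrict_apply_univ _).symm
      _ = 0 := by rw [huniv]; exact ae_iff.mp h2
  have hE : MeasurableSet {p : K × X | T p.1 p.2 ∈ Z} := hTmeas hZm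
  have hE0 : (μK.prod ν) {p : K × X | T p.1 p.2 ∈ Z} = 0 := by
    rw [Measure.measure_prod_null hE]
    exact Filter.Eventually.of_forall fun k => hnullpre k
  have hE' : MeasurableSet {p : X × K | T p.2 p.1 ∈ Z} := (hTmeas.comp measurable_swap) hZm
  have hE0' : (ν.prod μK) {p : X × K | T p.2 p.1 ∈ Z} = 0 := by
    rw [← Measure.prod_swap, Measure.map_apply measurable_swap hE']
    exact hE0
  have hae2 : ∀ᵐ x ∂ν, μK {k | T k x ∈ Z} = 0 := by
    have h := (Measure.measure_prod_null hE').mp hE0'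
    filter_upwards [h] with x hx
    exact hx
  have hLψ : (fun x => (∫ k, φ (T k x) * ρ k x ∂μK) / (∫ k, ρ k x ∂μK)) =ᵐ[ν] f := by
    filter_upwards [hae2] with x hx
    have hae3 : (fun k => φ (T k x) * ρ k x) =ᵐ[μK] fun k => ψ (T k x) * ρ k x := by
      have h4 : ∀ᵐ k ∂μK, T k x ∉ Z := by
        rw [ae_iff]
        simpa using hx
      filter_upwards [h4] with k hk
      rw [hZeq _ hk]
    rw [hf, hN, hD]
    simp only
    rw [integral_congr_ae hae3]
  exact hLψ.trans (hmain.trans (condExp_congr_ae hφψ.symm))
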